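/- In the group D_{2g+2} ⋉ (ℤ/2)² with a = (r₁r₂, 0), b = (r₂, e₁) generating a copy of AM_g, the element (r₁, e₁+e₂) is an involution lying outside the subgroup ⟨a, b⟩ of index 2, and it normalizes ⟨a, b⟩. -/

import Mathlib

/-- The Klein four group `(ℤ/2)²`, written multiplicatively. -/
abbrev V2 : Type := Multiplicative (ZMod 2) × Multiplicative (ZMod 2)

/-- `e₁ = (1,0) ∈ (ℤ/2)²`. -/
def e₁ : V2 := (Multiplicative.ofAdd 1, 1)

/-- `e₁ + e₂ = (1,1) ∈ (ℤ/2)²`. -/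
def e₁e₂ : V2 := (Multiplicative.ofAdd 1, Multiplicative.ofAdd 1)

abbrev M2 : Type := Multiplicative (ZMod 2)

def sHom : V2 →* M2 := (MonoidHom.fst M2 M2) * (MonoidHom.snd M2 M2)

lemma sHom_apply (v : V2) : sHom v = v.1 * v.2 := rfl

lemma sHom_swap (v : V2) : sHom ((MulEquiv.prodComm : V2 ≃* V2) v) = sHom v := by
  simp only [sHom_apply, MulEquiv.coe_prodComm, Prod.fst_swap, Prod.snd_swap]
  exact mul_comm _ _

def εHom (n : ℕ) : DihedralGroup n →* M2 where
  toFun d := match d with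
    | .r _ => 1
    | .sr _ => Multiplicative.ofAdd 1
  map_one' := rfl
  map_mul' x y := by
    cases x <;> cases y <;>
      simp only [DihedralGroup.r_mul_r, DihedralGroup.r_mul_sr,
        DihedralGroup.sr_mul_r, DihedralGroup.sr_mul_sr] <;> decide

lemma εHom_r (n : ℕ) (j : ZMod n) : εHom n (.r j) = 1 := rfl
lemma εHom_sr (n : ℕ) (j : ZMod n) : εHom n (.sr j) = Multiplicative.ofAdd 1 := rfl

def πHom {n : ℕ} (φ : DihedralGroup n →* MulAut V2)
    (hφ : ∀ d v, sHom (φ d v) = sHom v) : (V2 ⋊[φ] DihedralGroup n) →* M2 where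
  toFun x := sHom x.left * εHom n x.right
  map_one' := by simp
  map_mul' x y := by
    simp only [SemidirectProduct.mul_left, SemidirectProduct.mul_right, map_mul, hφ]
    exact mul_mul_mul_comm _ _ _ _

lemma πHom_apply {n : ℕ} (φ : DihedralGroup n →* MulAut V2)
    (hφ : ∀ d v, sHom (φ d v) = sHom v) (x : V2 ⋊[φ] DihedralGroup n) :
    πHom φ hφ x = sHom x.left * εHom n x.right := rfl

/-- In `D_{2g+2} ⋉ (ℤ/2)²` (with `r₁ = sr 0` acting trivially and `r₂ = sr 1`
swapping the coordinates), with `a = (r₁r₂, 0)` and `b = (r₂, e₁)` generating a copy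
of the Accola–Maclachlan group `AM_g`, the element `t = (r₁, e₁+e₂)` is an
involution lying outside the subgroup `⟨a, b⟩`, which has index 2, and `t`
normalizes `⟨a, b⟩`. -/
theorem am_orientation_reversing_involution (g : ℕ) (hg : 2 ≤ g)
    (φ : DihedralGroup (2 * g + 2) →* MulAut V2)
    (h0 : φ (DihedralGroup.sr 0) = 1)
    (h1 : φ (DihedralGroup.sr 1) = (MulEquiv.prodComm : V2 ≃* V2)) :
    let a : V2 ⋊[φ] DihedralGroup (2 * g + 2) := ⟨1, DihedralGroup.r 1⟩
    let b : V2 ⋊[φ] DihedralGroup (2 * g + 2) := ⟨e₁, DihedralGroup.sr 1⟩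
    let t : V2 ⋊[φ] DihedralGroup (2 * g + 2) := ⟨e₁e₂, DihedralGroup.sr 0⟩
    t * t = 1 ∧ t ∉ Subgroup.closure {a, b} ∧
      (Subgroup.closure {a, b}).index = 2 ∧
      t ∈ Subgroup.normalizer ((Subgroup.closure {a, b} : Subgroup _) : Set _) := by
  intro a b t
  haveI : NeZero (2 * g + 2) := ⟨by omega⟩
  have hsr0r1 : (DihedralGroup.sr 0 : DihedralGroup (2 * g + 2)) * DihedralGroup.sr 1
      = DihedralGroup.r 1 := by rw [DihedralGroup.sr_mul_sr, sub_zero]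
  have hr1 : φ (DihedralGroup.r 1) = (MulEquiv.prodComm : V2 ≃* V2) := by
    rw [← hsr0r1, map_mul, h0, h1, one_mul]
  have hpow : ∀ (m : ℕ) (v : V2),
      sHom ((((MulEquiv.prodComm : V2 ≃* V2) : MulAut V2) ^ m) v) = sHom v := by
    intro m
    induction m with
    | zero => intro v; rfl
    | succ k ih =>
      intro v
      rw [pow_succ, MulAut.mul_apply, ih, sHom_swap]
  have key : ∀ j : ZMod (2 * g + 2),
      φ (DihedralGroup.r j) = ((MulEquiv.prodComm : V2 ≃* V2) : MulAut V2) ^ j.val := by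
    intro j
    have hj : (DihedralGroup.r j : DihedralGroup (2 * g + 2))
        = (DihedralGroup.r 1) ^ j.val := by
      rw [DihedralGroup.r_one_pow, ZMod.natCast_val, ZMod.cast_id]
    rw [hj, map_pow, hr1]
  have hφ : ∀ (d : DihedralGroup (2 * g + 2)) (v : V2), sHom (φ d v) = sHom v := by
    intro d v
    cases d with
    | r j => rw [key j]; exact hpow _ v
    | sr j =>
      have hj : (DihedralGroup.sr j : DihedralGroup (2 * g + 2))
          = DihedralGroup.sr 0 * DihedralGroup.r j := by
        rw [DihedralGroup.sr_mul_r, zero_add]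
      rw [hj, map_mul, h0, one_mul, key j]
      exact hpow _ v
  set π := πHom φ hφ with hπdef
  have hπa : π a = 1 := by
    show sHom 1 * (1 : M2) = 1
    decide
  have hπb : π b = 1 := by
    show sHom e₁ * Multiplicative.ofAdd (1 : ZMod 2) = 1
    decide
  have hπt : π t = Multiplicative.ofAdd 1 := by
    show sHom e₁e₂ * Multiplicative.ofAdd (1 : ZMod 2) = Multiplicative.ofAdd 1
    decide
  set H := Subgroup.closure {a, b} with hHdef
  have haH : a ∈ H := Subgroup.subset_closure (Set.mem_insert _ _)
  have hbH : b ∈ H := Subgroup.subset_closure (Set.mem_insert_iff.mpr (Or.inr rfl))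
  have ha_pow : ∀ m : ℕ, a ^ m
      = (⟨1, DihedralGroup.r (m : ZMod (2 * g + 2))⟩ : V2 ⋊[φ] DihedralGroup (2 * g + 2)) := by
    intro m
    induction m with
    | zero =>
      refine SemidirectProduct.ext rfl ?_
      show (1 : DihedralGroup (2 * g + 2)) = DihedralGroup.r ((0 : ℕ) : ZMod (2 * g + 2))
      rw [Nat.cast_zero, DihedralGroup.one_def]
    | succ k ih =>
      rw [pow_succ, ih]
      refine SemidirectProduct.ext ?_ ?_
      · show (1 : V2) * (φ (DihedralGroup.r (k : ZMod (2 * g + 2)))) 1 = 1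
        rw [map_one, mul_one]
      · show DihedralGroup.r (k : ZMod (2 * g + 2)) * DihedralGroup.r 1
            = DihedralGroup.r ((k + 1 : ℕ) : ZMod (2 * g + 2))
        rw [DihedralGroup.r_mul_r, Nat.cast_add, Nat.cast_one]
  have h1r : ∀ j : ZMod (2 * g + 2),
      (⟨1, DihedralGroup.r j⟩ : V2 ⋊[φ] DihedralGroup (2 * g + 2)) ∈ H := by
    intro j
    have := pow_mem haH j.val
    rwa [ha_pow, ZMod.natCast_val, ZMod.cast_id] at this
  have he12r : ∀ j : ZMod (2 * g + 2),
      (⟨e₁e₂, DihedralGroup.r j⟩ : V2 ⋊[φ] DihedralGroup (2 * g + 2)) ∈ H := by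
    intro j
    have hb2 : b * b * (⟨1, DihedralGroup.r j⟩ : V2 ⋊[φ] DihedralGroup (2 * g + 2))
        = ⟨e₁e₂, DihedralGroup.r j⟩ := by
      refine SemidirectProduct.ext ?_ ?_
      · show (e₁ * (φ (DihedralGroup.sr 1)) e₁) *
            (φ (DihedralGroup.sr 1 * DihedralGroup.sr 1)) 1 = e₁e₂
        rw [map_one, mul_one, h1]
        decide
      · show (DihedralGroup.sr 1 * DihedralGroup.sr 1) * DihedralGroup.r j = DihedralGroup.r j
        rw [DihedralGroup.sr_mul_self, one_mul]
    exact hb2 ▸ mul_mem (mul_mem hbH hbH) (h1r j)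
  have he1sr : ∀ j : ZMod (2 * g + 2),
      (⟨e₁, DihedralGroup.sr j⟩ : V2 ⋊[φ] DihedralGroup (2 * g + 2)) ∈ H := by
    intro j
    have hb1 : b * (⟨1, DihedralGroup.r (j - 1)⟩ : V2 ⋊[φ] DihedralGroup (2 * g + 2))
        = ⟨e₁, DihedralGroup.sr j⟩ := by
      refine SemidirectProduct.ext ?_ ?_
      · show e₁ * (φ (DihedralGroup.sr 1)) 1 = e₁
        rw [map_one, mul_one]
      · show DihedralGroup.sr 1 * DihedralGroup.r (j - 1) = DihedralGroup.sr j
        rw [DihedralGroup.sr_mul_r, add_sub_cancel]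
    exact hb1 ▸ mul_mem hbH (h1r (j - 1))
  have he2sr : ∀ j : ZMod (2 * g + 2),
      (⟨(1, Multiplicative.ofAdd 1), DihedralGroup.sr j⟩ :
        V2 ⋊[φ] DihedralGroup (2 * g + 2)) ∈ H := by
    intro j
    have hab : a * b * (⟨1, DihedralGroup.r j⟩ : V2 ⋊[φ] DihedralGroup (2 * g + 2))
        = ⟨(1, Multiplicative.ofAdd 1), DihedralGroup.sr j⟩ := by
      refine SemidirectProduct.ext ?_ ?_
      · show ((1 : V2) * (φ (DihedralGroup.r 1)) e₁) *
            (φ (DihedralGroup.r 1 * DihedralGroup.sr 1)) 1 = (1, Multiplicative.ofAdd 1)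
        rw [map_one, mul_one, hr1]
        decide
      · show (DihedralGroup.r 1 * DihedralGroup.sr 1) * DihedralGroup.r j = DihedralGroup.sr j
        rw [DihedralGroup.r_mul_sr, sub_self, DihedralGroup.sr_mul_r, zero_add]
    exact hab ▸ mul_mem (mul_mem haH hbH) (h1r j)
  have hker : H = π.ker := by
    apply le_antisymm
    · rw [hHdef]
      apply (Subgroup.closure_le _).mpr
      intro x hx
      rcases hx with rfl | hx
      · exact hπa
      · rw [Set.mem_singleton_iff] at hx
        subst hx
        exact hπb
    · intro x hx
      rw [MonoidHom.mem_ker] at hx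
      obtain ⟨v, d⟩ := x
      cases d with
      | r j =>
        have hx' : sHom v * (1 : M2) = 1 := hx
        rw [mul_one] at hx'
        have hv : ∀ w : V2, sHom w = 1 → w = 1 ∨ w = e₁e₂ := by decide
        rcases hv v hx' with rfl | rfl
        · exact h1r j
        · exact he12r j
      | sr j =>
        have hx' : sHom v * Multiplicative.ofAdd (1 : ZMod 2) = 1 := hx
        have hv : ∀ w : V2, sHom w * Multiplicative.ofAdd (1 : ZMod 2) = 1 →
            w = e₁ ∨ w = (1, Multiplicative.ofAdd 1) := by decide
        rcases hv v hx' with rfl | rfl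
        · exact he1sr j
        · exact he2sr j
  refine ⟨?_, ?_, ?_, ?_⟩
  · refine SemidirectProduct.ext ?_ ?_
    · show e₁e₂ * (φ (DihedralGroup.sr 0)) e₁e₂ = 1
      rw [h0]
      decide
    · show DihedralGroup.sr 0 * DihedralGroup.sr 0 = 1
      exact DihedralGroup.sr_mul_self 0
  · rw [hker]
    intro h
    rw [MonoidHom.mem_ker, hπt] at h
    exact absurd h (by decide)
  · rw [hker, Subgroup.index_eq_two_iff]
    refine ⟨t, fun x => ?_⟩
    have hx : x * t ∈ π.ker ↔ π x * Multiplicative.ofAdd 1 = 1 := by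
      rw [MonoidHom.mem_ker, map_mul, hπt]
    rw [hx, MonoidHom.mem_ker]
    generalize π x = u
    revert u
    decide
  · rw [hker, Subgroup.normalizer_eq_top_iff.mpr π.normal_ker]
    exact Subgroup.mem_top t
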